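/- Let K be a Markov kernel on X such that there exist ε ∈ (0,1] and a probability measure ν on X with K(x, A) ≥ ε ν(A) for every x ∈ X and every measurable A. Then for any two probability measures λ₁, λ₂ on X, ‖λ₁K − λ₂K‖_TV ≤ (1 − ε) ‖λ₁ − λ₂‖_TV. -/

import Mathlib

open MeasureTheory ProbabilityTheory
open scoped ENNReal

/-- Total variation distance between two measures:
`‖μ − ν‖_TV = sup_{A measurable} |μ(A) − ν(A)|`. -/
noncomputable def tvDist {X : Type*} [MeasurableSpace X] (μ ν : Measure X) : ℝ :=
  ⨆ A : {A : Set X // MeasurableSet A}, |(μ A.1).toReal - (ν A.1).toReal|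

/-- Key one-sided estimate: if `S` is a Hahn decomposition set for `lam₁ - lam₂`,
then for each measurable `A`,
`(lam₁ K) A - (lam₂ K) A ≤ (1-ε) (lam₁ S - lam₂ S)`. -/
lemma key_one_sided
    {X : Type*} [MeasurableSpace X]
    (K : Kernel X X) [IsMarkovKernel K]
    (ε : ℝ) (hε0 : 0 < ε) (hε1 : ε ≤ 1)
    (ν : Measure X) [IsProbabilityMeasure ν]
    (hmin : ∀ x : X, ∀ A : Set X, MeasurableSet A → ENNReal.ofReal ε * ν A ≤ K x A)
    (lam₁ lam₂ : Measure X) [IsProbabilityMeasure lam₁] [IsProbabilityMeasure lam₂]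
    (S : Set X) (hS : MeasurableSet S)
    (hpos : ∀ t, MeasurableSet t → t ⊆ S → lam₂ t ≤ lam₁ t)
    (hneg : ∀ t, MeasurableSet t → t ⊆ Sᶜ → lam₁ t ≤ lam₂ t)
    (A : Set X) (hA : MeasurableSet A) :
    ((lam₁.bind (fun x => K x)) A).toReal - ((lam₂.bind (fun x => K x)) A).toReal ≤
      (1 - ε) * ((lam₁ S).toReal - (lam₂ S).toReal) := by
  set c : ℝ≥0∞ := ENNReal.ofReal ε * ν A with hc
  have hc_le_one : c ≤ 1 := by
    calc c ≤ ENNReal.ofReal ε * 1 := mul_le_mul_right prob_le_one _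
      _ ≤ 1 := by
            rw [mul_one]
            exact ENNReal.ofReal_le_one.2 hε1
  have hc_ne_top : c ≠ ⊤ := (lt_of_le_of_lt hc_le_one ENNReal.one_lt_top).ne
  set g : X → ℝ≥0∞ := fun x => K x A - c with hg
  have hg_meas : Measurable g := (K.measurable_coe hA).sub measurable_const
  -- upper bound on g
  have hgub : ∀ x, g x ≤ ENNReal.ofReal (1 - ε) := by
    intro x
    rw [hg]
    refine tsub_le_iff_right.2 ?_
    have h1 : K x A + ENNReal.ofReal ε * ν Aᶜ ≤ 1 := by
      have := hmin x Aᶜ hA.compl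
      calc K x A + ENNReal.ofReal ε * ν Aᶜ ≤ K x A + K x Aᶜ := by gcongr
        _ = 1 := by
            rw [measure_add_measure_compl hA, measure_univ]
    have h2 : (1 : ℝ≥0∞) = ENNReal.ofReal (1 - ε) + c + ENNReal.ofReal ε * ν Aᶜ := by
      have hν : ν A + ν Aᶜ = 1 := by
        rw [measure_add_measure_compl hA, measure_univ]
      have : ENNReal.ofReal (1 - ε) + ENNReal.ofReal ε = 1 := by
        rw [← ENNReal.ofReal_add (by linarith) hε0.le]
        norm_num
      calc (1 : ℝ≥0∞) = ENNReal.ofReal (1 - ε) + ENNReal.ofReal ε * 1 := by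
            rw [mul_one, this]
        _ = ENNReal.ofReal (1 - ε) + ENNReal.ofReal ε * (ν A + ν Aᶜ) := by rw [hν]
        _ = ENNReal.ofReal (1 - ε) + c + ENNReal.ofReal ε * ν Aᶜ := by
            rw [hc, mul_add]; ring
    have h3 : K x A + ENNReal.ofReal ε * ν Aᶜ ≤
        (ENNReal.ofReal (1 - ε) + c) + ENNReal.ofReal ε * ν Aᶜ := by
      rw [← h2]; exact h1
    have hfin : ENNReal.ofReal ε * ν Aᶜ ≠ ⊤ :=
      (ENNReal.mul_lt_top ENNReal.ofReal_lt_top (measure_lt_top ν Aᶜ)).ne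
    exact ENNReal.le_of_add_le_add_right hfin h3
  -- bind applied to A
  have hKmeas : Measurable (fun x => K x) := K.measurable
  have hbind : ∀ (lam : Measure X), (lam.bind (fun x => K x)) A = ∫⁻ x, K x A ∂lam := by
    intro lam
    rw [Measure.bind_apply hA hKmeas.aemeasurable]
  have hdecomp : ∀ x, K x A = c + g x := fun x =>
    (add_tsub_cancel_of_le (hmin x A hA)).symm
  have hbind' : ∀ (lam : Measure X) [IsProbabilityMeasure lam],
      (lam.bind (fun x => K x)) A = c + ∫⁻ x, g x ∂lam := by
    intro lam _
    rw [hbind lam]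
    calc ∫⁻ x, K x A ∂lam = ∫⁻ x, c + g x ∂lam := by
          exact lintegral_congr hdecomp
      _ = c * lam Set.univ + ∫⁻ x, g x ∂lam := by
          rw [lintegral_add_left measurable_const, lintegral_const]
      _ = c + ∫⁻ x, g x ∂lam := by rw [measure_univ, mul_one]
  -- integrals are finite
  have hIfin : ∀ (lam : Measure X) [IsProbabilityMeasure lam],
      ∫⁻ x, g x ∂lam ≠ ⊤ := by
    intro lam _
    have : ∫⁻ x, g x ∂lam ≤ ∫⁻ _, ENNReal.ofReal (1 - ε) ∂lam :=
      lintegral_mono hgub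
    rw [lintegral_const, measure_univ, mul_one] at this
    exact (lt_of_le_of_lt this ENNReal.ofReal_lt_top).ne
  set I₁ := ∫⁻ x, g x ∂lam₁ with hI₁
  set I₂ := ∫⁻ x, g x ∂lam₂ with hI₂
  -- key inequality on I₁
  have hres_le : lam₂.restrict S ≤ lam₁.restrict S := by
    refine Measure.le_iff.2 fun t ht => ?_
    rw [Measure.restrict_apply ht, Measure.restrict_apply ht]
    exact hpos _ (ht.inter hS) Set.inter_subset_right
  have hres_le' : lam₁.restrict Sᶜ ≤ lam₂.restrict Sᶜ := by
    refine Measure.le_iff.2 fun t ht => ?_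
    rw [Measure.restrict_apply ht, Measure.restrict_apply ht]
    exact hneg _ (ht.inter hS.compl) Set.inter_subset_right
  set ρ : Measure X := lam₁.restrict S - lam₂.restrict S with hρ
  have hρuniv : ρ Set.univ = lam₁ S - lam₂ S := by
    rw [hρ, Measure.sub_apply MeasurableSet.univ hres_le,
      Measure.restrict_apply_univ, Measure.restrict_apply_univ]
  have hsplit : lam₁.restrict S = ρ + lam₂.restrict S := by
    rw [hρ, Measure.sub_add_cancel_of_le hres_le]
  have hkey : I₁ ≤ ENNReal.ofReal (1 - ε) * (lam₁ S - lam₂ S) + I₂ := by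
    have e1 : I₁ = ∫⁻ x in S, g x ∂lam₁ + ∫⁻ x in Sᶜ, g x ∂lam₁ := by
      rw [hI₁, lintegral_add_compl _ hS]
    have e2 : I₂ = ∫⁻ x in S, g x ∂lam₂ + ∫⁻ x in Sᶜ, g x ∂lam₂ := by
      rw [hI₂, lintegral_add_compl _ hS]
    have b1 : ∫⁻ x in S, g x ∂lam₁ ≤
        ENNReal.ofReal (1 - ε) * (lam₁ S - lam₂ S) + ∫⁻ x in S, g x ∂lam₂ := by
      calc ∫⁻ x in S, g x ∂lam₁ = ∫⁻ x, g x ∂(ρ + lam₂.restrict S) := by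
            rw [← hsplit]
        _ = ∫⁻ x, g x ∂ρ + ∫⁻ x in S, g x ∂lam₂ := lintegral_add_measure _ _ _
        _ ≤ ENNReal.ofReal (1 - ε) * (lam₁ S - lam₂ S) + ∫⁻ x in S, g x ∂lam₂ := by
            gcongr
            calc ∫⁻ x, g x ∂ρ ≤ ∫⁻ _, ENNReal.ofReal (1 - ε) ∂ρ := lintegral_mono hgub
              _ = ENNReal.ofReal (1 - ε) * (lam₁ S - lam₂ S) := by
                  rw [lintegral_const, hρuniv]
    have b2 : ∫⁻ x in Sᶜ, g x ∂lam₁ ≤ ∫⁻ x in Sᶜ, g x ∂lam₂ :=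
      lintegral_mono' hres_le' le_rfl
    calc I₁ = ∫⁻ x in S, g x ∂lam₁ + ∫⁻ x in Sᶜ, g x ∂lam₁ := e1
      _ ≤ (ENNReal.ofReal (1 - ε) * (lam₁ S - lam₂ S) + ∫⁻ x in S, g x ∂lam₂)
            + ∫⁻ x in Sᶜ, g x ∂lam₂ := by exact add_le_add b1 b2
      _ = ENNReal.ofReal (1 - ε) * (lam₁ S - lam₂ S) + I₂ := by rw [e2, add_assoc]
  -- pass to reals
  have hI₁fin : I₁ ≠ ⊤ := hIfin lam₁
  have hI₂fin : I₂ ≠ ⊤ := hIfin lam₂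
  have hmulfin : ENNReal.ofReal (1 - ε) * (lam₁ S - lam₂ S) ≠ ⊤ := by
    exact (ENNReal.mul_lt_top ENNReal.ofReal_lt_top
      (lt_of_le_of_lt (tsub_le_self) (measure_lt_top lam₁ S))).ne
  have hreal : I₁.toReal ≤ (1 - ε) * ((lam₁ S).toReal - (lam₂ S).toReal) + I₂.toReal := by
    have := ENNReal.toReal_mono (by
      exact ENNReal.add_ne_top.2 ⟨hmulfin, hI₂fin⟩) hkey
    rw [ENNReal.toReal_add hmulfin hI₂fin, ENNReal.toReal_mul,
      ENNReal.toReal_ofReal (by linarith),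
      ENNReal.toReal_sub_of_le (hpos S hS le_rfl) (measure_ne_top lam₁ S)] at this
    exact this
  have e₁ := hbind' lam₁
  have e₂ := hbind' lam₂
  rw [e₁, e₂, ENNReal.toReal_add hc_ne_top hI₁fin, ENNReal.toReal_add hc_ne_top hI₂fin]
  linarith

/-- If the Markov kernel `K` admits a Doeblin minorization
`K(x, A) ≥ ε ν(A)` with `ε ∈ (0,1]` and `ν` a probability measure, then for any
two probability measures `λ₁, λ₂`, `‖λ₁K − λ₂K‖_TV ≤ (1 − ε) ‖λ₁ − λ₂‖_TV`. -/
theorem tv_contraction_of_minorized_kernel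
    {X : Type*} [MeasurableSpace X]
    (K : Kernel X X) [IsMarkovKernel K]
    (ε : ℝ) (hε0 : 0 < ε) (hε1 : ε ≤ 1)
    (ν : Measure X) [IsProbabilityMeasure ν]
    (hmin : ∀ x : X, ∀ A : Set X, MeasurableSet A → ENNReal.ofReal ε * ν A ≤ K x A)
    (lam₁ lam₂ : Measure X) [IsProbabilityMeasure lam₁] [IsProbabilityMeasure lam₂] :
    tvDist (lam₁.bind (fun x => K x)) (lam₂.bind (fun x => K x)) ≤
      (1 - ε) * tvDist lam₁ lam₂ := by
  obtain ⟨S, hS, hpos, hneg⟩ := hahn_decomposition (μ := lam₁) (ν := lam₂)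
  set d : ℝ := (lam₁ S).toReal - (lam₂ S).toReal with hd
  have hd0 : 0 ≤ d := by
    rw [hd]
    have := hpos S hS le_rfl
    have h1 := measure_ne_top lam₁ S
    exact sub_nonneg.2 (ENNReal.toReal_mono h1 this)
  -- d ≤ tvDist lam₁ lam₂
  have hbdd : BddAbove (Set.range fun A : {A : Set X // MeasurableSet A} =>
      |(lam₁ A.1).toReal - (lam₂ A.1).toReal|) := by
    refine ⟨1, ?_⟩
    rintro x ⟨A, rfl⟩
    have h1 : (lam₁ A.1).toReal ≤ 1 := by
      rw [← ENNReal.toReal_one]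
      exact ENNReal.toReal_mono ENNReal.one_ne_top prob_le_one
    have h2 : (lam₂ A.1).toReal ≤ 1 := by
      rw [← ENNReal.toReal_one]
      exact ENNReal.toReal_mono ENNReal.one_ne_top prob_le_one
    have h3 : 0 ≤ (lam₁ A.1).toReal := ENNReal.toReal_nonneg
    have h4 : 0 ≤ (lam₂ A.1).toReal := ENNReal.toReal_nonneg
    rw [abs_le]; constructor <;> linarith
  have hdle : d ≤ tvDist lam₁ lam₂ := by
    have := le_ciSup hbdd (⟨S, hS⟩ : {A : Set X // MeasurableSet A})
    exact le_trans (le_abs_self _) this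
  -- the symmetric Hahn data for lam₂ - lam₁ with set Sᶜ
  have hneg' : ∀ t, MeasurableSet t → t ⊆ Sᶜᶜ → lam₂ t ≤ lam₁ t := by
    intro t ht hts
    exact hpos t ht (by rwa [compl_compl] at hts)
  have hd' : (lam₂ Sᶜ).toReal - (lam₁ Sᶜ).toReal = d := by
    have h1 : (lam₁ Sᶜ).toReal = 1 - (lam₁ S).toReal := by
      have := measure_add_measure_compl (μ := lam₁) hS
      rw [measure_univ] at this
      have h := congrArg ENNReal.toReal this
      rw [ENNReal.toReal_add (measure_ne_top _ _) (measure_ne_top _ _),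
        ENNReal.toReal_one] at h
      linarith
    have h2 : (lam₂ Sᶜ).toReal = 1 - (lam₂ S).toReal := by
      have := measure_add_measure_compl (μ := lam₂) hS
      rw [measure_univ] at this
      have h := congrArg ENNReal.toReal this
      rw [ENNReal.toReal_add (measure_ne_top _ _) (measure_ne_top _ _),
        ENNReal.toReal_one] at h
      linarith
    rw [h1, h2, hd]; ring
  refine ciSup_le fun A => ?_
  have key₁ := key_one_sided K ε hε0 hε1 ν hmin lam₁ lam₂ S hS hpos hneg A.1 A.2
  have key₂ := key_one_sided K ε hε0 hε1 ν hmin lam₂ lam₁ Sᶜ hS.compl hneg hneg' A.1 A.2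
  rw [hd'] at key₂
  rw [← hd] at key₁
  have hεd : (1 - ε) * d ≤ (1 - ε) * tvDist lam₁ lam₂ := by
    apply mul_le_mul_of_nonneg_left hdle (by linarith)
  rw [abs_le]
  constructor <;> linarith
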